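/- The system L_3(3; 2^{×5}) is non-special of virtual dimension −1; that is, there exist 5 pairwise linearly independent points p_1,...,p_5 ∈ ℚ^4 \ {0} such that the only homogeneous polynomial of degree 3 in 4 variables over ℚ vanishing together with all its first-order partial derivatives at every p_i is the zero polynomial, and indeed C(3+3,3) − 5·C(2+2,3) − 1 = 20 − 20 − 1 = −1. -/

import Mathlib

open MvPolynomial

/-- The differential operator `∂₀^{ν 0} ∂₁^{ν 1} ∂₂^{ν 2} ∂₃^{ν 3}` on polynomials
in 4 variables over `ℚ`. -/
noncomputable def diffOp (ν : Fin 4 → ℕ) :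
    Module.End ℚ (MvPolynomial (Fin 4) ℚ) :=
  ((pderiv (0 : Fin 4)).toLinearMap ^ ν 0) * ((pderiv (1 : Fin 4)).toLinearMap ^ ν 1) *
    ((pderiv (2 : Fin 4)).toLinearMap ^ ν 2) * ((pderiv (3 : Fin 4)).toLinearMap ^ ν 3)

/-- Polynomials all of whose partial derivatives of order `< m` (including order 0)
vanish at the point `pt : ℚ⁴`. -/
noncomputable def vanishingSpace (m : ℕ) (pt : Fin 4 → ℚ) :
    Submodule ℚ (MvPolynomial (Fin 4) ℚ) :=
  ⨅ (ν : Fin 4 → ℕ) (_ : ∑ j, ν j < m),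
    LinearMap.ker ((aeval pt).toLinearMap ∘ₗ
      (diffOp ν : MvPolynomial (Fin 4) ℚ →ₗ[ℚ] MvPolynomial (Fin 4) ℚ))

/-- `V(d; m_1,…,m_r; p_1,…,p_r)`: homogeneous polynomials of degree `d` in 4 variables
over `ℚ` vanishing to order `≥ ms[i]` at `pts i` for each `i`. -/
noncomputable def systemSpace (d : ℕ) (ms : List ℕ) (pts : Fin ms.length → Fin 4 → ℚ) :
    Submodule ℚ (MvPolynomial (Fin 4) ℚ) :=
  homogeneousSubmodule (Fin 4) ℚ d ⊓ ⨅ i, vanishingSpace (ms.get i) (pts i)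

/-- The virtual dimension `vdim L_3(d; m_1,…,m_r) = C(d+3,3) − Σ C(m_i+2,3) − 1`. -/
def vdim (d : ℕ) (ms : List ℕ) : ℤ :=
  ((d + 3).choose 3 : ℤ) - (ms.map fun m => ((m + 2).choose 3 : ℤ)).sum - 1

/-- The linear system `L_3(d; m_1,…,m_r)` is non-special: there exist pairwise linearly
independent points of `ℚ⁴ \ {0}` at which the space of degree-`d` homogeneous polynomials
with the prescribed multiplicities has dimension `max (vdim + 1) 0`
(the expected dimension). -/
noncomputable def nonSpecial (d : ℕ) (ms : List ℕ) : Prop :=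
  ∃ pts : Fin ms.length → Fin 4 → ℚ,
    (∀ i, pts i ≠ 0) ∧
    (∀ i j, i ≠ j → LinearIndependent ℚ ![pts i, pts j]) ∧
    (Module.finrank ℚ (systemSpace d ms pts) : ℤ) = max (vdim d ms + 1) 0


noncomputable def F (a b c e : ℕ) : Fin 4 →₀ ℕ :=
  Finsupp.single 0 a + Finsupp.single 1 b + Finsupp.single 2 c + Finsupp.single 3 e

theorem F_apply (a b c e : ℕ) (i : Fin 4) :
    F a b c e i = ![a, b, c, e] i := by
  fin_cases i <;> simp [F, Finsupp.single_apply]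

theorem eq_F (m : Fin 4 →₀ ℕ) : m = F (m 0) (m 1) (m 2) (m 3) := by
  ext i; fin_cases i <;> simp [F_apply]

theorem degree_eq (m : Fin 4 →₀ ℕ) : m.degree = m 0 + m 1 + m 2 + m 3 := by
  rw [Finsupp.degree_eq_weight_one]
  rw [show ((Finsupp.weight fun _ => 1) m : ℕ) = ∑ i : Fin 4, m i from ?_]
  · simp [Fin.sum_univ_four]
  · simp [Finsupp.weight_apply, Finsupp.sum_fintype]

theorem F_eq_iff (a b c e a' b' c' e' : ℕ) :
    F a b c e = F a' b' c' e' ↔ (a = a' ∧ b = b' ∧ c = c' ∧ e = e') := by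
  constructor
  · intro h
    refine ⟨?_, ?_, ?_, ?_⟩ <;>
      [have := congrArg (fun m : Fin 4 →₀ ℕ => m 0) h;
       have := congrArg (fun m : Fin 4 →₀ ℕ => m 1) h;
       have := congrArg (fun m : Fin 4 →₀ ℕ => m 2) h;
       have := congrArg (fun m : Fin 4 →₀ ℕ => m 3) h] <;> simpa [F_apply] using this
  · rintro ⟨rfl, rfl, rfl, rfl⟩; rfl

theorem aeval_monomial_F (pt : Fin 4 → ℚ) (a b c e : ℕ) (r : ℚ) :
    aeval pt (monomial (F a b c e) r) = r * (pt 0 ^ a * pt 1 ^ b * pt 2 ^ c * pt 3 ^ e) := by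
  rw [aeval_monomial]
  rw [Finsupp.prod_fintype _ _ (fun i => pow_zero (pt i))]
  simp [Fin.prod_univ_four, F_apply, mul_assoc]

theorem pderiv_monomial_F (j : Fin 4) (a b c e : ℕ) (r : ℚ) :
    pderiv j (monomial (F a b c e) r) =
      monomial (F a b c e - Finsupp.single j 1) (r * ![a,b,c,e] j) := by
  rw [pderiv_monomial, F_apply]

theorem F_sub0 (a b c e : ℕ) : F a b c e - Finsupp.single 0 1 = F (a-1) b c e := by
  ext i; fin_cases i <;> simp [Finsupp.tsub_apply, F_apply, Finsupp.single_apply]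
theorem F_sub1 (a b c e : ℕ) : F a b c e - Finsupp.single 1 1 = F a (b-1) c e := by
  ext i; fin_cases i <;> simp [Finsupp.tsub_apply, F_apply, Finsupp.single_apply]
theorem F_sub2 (a b c e : ℕ) : F a b c e - Finsupp.single 2 1 = F a b (c-1) e := by
  ext i; fin_cases i <;> simp [Finsupp.tsub_apply, F_apply, Finsupp.single_apply]
theorem F_sub3 (a b c e : ℕ) : F a b c e - Finsupp.single 3 1 = F a b c (e-1) := by
  ext i; fin_cases i <;> simp [Finsupp.tsub_apply, F_apply, Finsupp.single_apply]

set_option maxHeartbeats 4000000 in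
theorem cubic_rep (f : MvPolynomial (Fin 4) ℚ) (hf : f.IsHomogeneous 3) :
    f = monomial (F 3 0 0 0) (coeff (F 3 0 0 0) f)
      + monomial (F 0 3 0 0) (coeff (F 0 3 0 0) f)
      + monomial (F 0 0 3 0) (coeff (F 0 0 3 0) f)
      + monomial (F 0 0 0 3) (coeff (F 0 0 0 3) f)
      + monomial (F 2 1 0 0) (coeff (F 2 1 0 0) f)
      + monomial (F 2 0 1 0) (coeff (F 2 0 1 0) f)
      + monomial (F 2 0 0 1) (coeff (F 2 0 0 1) f)
      + monomial (F 1 2 0 0) (coeff (F 1 2 0 0) f)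
      + monomial (F 0 2 1 0) (coeff (F 0 2 1 0) f)
      + monomial (F 0 2 0 1) (coeff (F 0 2 0 1) f)
      + monomial (F 1 0 2 0) (coeff (F 1 0 2 0) f)
      + monomial (F 0 1 2 0) (coeff (F 0 1 2 0) f)
      + monomial (F 0 0 2 1) (coeff (F 0 0 2 1) f)
      + monomial (F 1 0 0 2) (coeff (F 1 0 0 2) f)
      + monomial (F 0 1 0 2) (coeff (F 0 1 0 2) f)
      + monomial (F 0 0 1 2) (coeff (F 0 0 1 2) f)
      + monomial (F 1 1 1 0) (coeff (F 1 1 1 0) f)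
      + monomial (F 1 1 0 1) (coeff (F 1 1 0 1) f)
      + monomial (F 1 0 1 1) (coeff (F 1 0 1 1) f)
      + monomial (F 0 1 1 1) (coeff (F 0 1 1 1) f) := by
  ext m
  simp only [coeff_add, coeff_monomial]
  by_cases hdeg : m.degree = 3
  · obtain ⟨a, b, c, e, rfl, hsum⟩ :
        ∃ a b c e, m = F a b c e ∧ a + b + c + e = 3 :=
      ⟨_, _, _, _, eq_F m, by rw [← degree_eq]; exact hdeg⟩
    have ha : a ≤ 3 := by omega
    interval_cases a
    all_goals have hb : b ≤ 3 := by omega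
    all_goals interval_cases b
    all_goals have hc : c ≤ 3 := by omega
    all_goals interval_cases c
    all_goals have he : e ≤ 3 := by omega
    all_goals interval_cases e
    all_goals first
      | omega
      | (simp only [F_eq_iff]; norm_num)
  · have hz : coeff m f = 0 := hf.coeff_eq_zero hdeg
    have hne : ∀ a b c e : ℕ, a + b + c + e = 3 → F a b c e ≠ m := by
      intro a b c e h heq
      exact hdeg (by rw [← heq, degree_eq, F_apply, F_apply, F_apply, F_apply]; simpa using h)
    simp [hz,
      hne 3 0 0 0 (by norm_num),
      hne 0 3 0 0 (by norm_num),
      hne 0 0 3 0 (by norm_num),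
      hne 0 0 0 3 (by norm_num),
      hne 2 1 0 0 (by norm_num),
      hne 2 0 1 0 (by norm_num),
      hne 2 0 0 1 (by norm_num),
      hne 1 2 0 0 (by norm_num),
      hne 0 2 1 0 (by norm_num),
      hne 0 2 0 1 (by norm_num),
      hne 1 0 2 0 (by norm_num),
      hne 0 1 2 0 (by norm_num),
      hne 0 0 2 1 (by norm_num),
      hne 1 0 0 2 (by norm_num),
      hne 0 1 0 2 (by norm_num),
      hne 0 0 1 2 (by norm_num),
      hne 1 1 1 0 (by norm_num),
      hne 1 1 0 1 (by norm_num),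
      hne 1 0 1 1 (by norm_num),
      hne 0 1 1 1 (by norm_num)]

noncomputable def P : Fin 5 → Fin 4 → ℚ :=
  ![![1,0,0,0], ![0,1,0,0], ![0,0,1,0], ![0,0,0,1], ![1,1,1,1]]

theorem cond_of_mem {f : MvPolynomial (Fin 4) ℚ} {pt : Fin 4 → ℚ}
    (hf : f ∈ vanishingSpace 2 pt) (ν : Fin 4 → ℕ) (hν : ∑ j, ν j < 2) :
    aeval pt (diffOp ν f) = 0 := by
  rw [vanishingSpace] at hf
  simp only [Submodule.mem_iInf] at hf
  simpa using hf ν hν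

theorem diffOp_zero (f : MvPolynomial (Fin 4) ℚ) : diffOp ![0,0,0,0] f = f := by simp [diffOp]
theorem diffOp_e0 (f : MvPolynomial (Fin 4) ℚ) : diffOp ![1,0,0,0] f = pderiv 0 f := by simp [diffOp]
theorem diffOp_e1 (f : MvPolynomial (Fin 4) ℚ) : diffOp ![0,1,0,0] f = pderiv 1 f := by simp [diffOp]
theorem diffOp_e2 (f : MvPolynomial (Fin 4) ℚ) : diffOp ![0,0,1,0] f = pderiv 2 f := by simp [diffOp]
theorem diffOp_e3 (f : MvPolynomial (Fin 4) ℚ) : diffOp ![0,0,0,1] f = pderiv 3 f := by simp [diffOp]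

set_option maxHeartbeats 4000000 in
theorem key_zero (f : MvPolynomial (Fin 4) ℚ)
    (hhom : f.IsHomogeneous 3) (hvan : ∀ i : Fin 5, f ∈ vanishingSpace 2 (P i)) : f = 0 := by
  have hrep := cubic_rep f hhom
  have h0z := cond_of_mem (hvan 0) ![0,0,0,0] (by norm_num [Fin.sum_univ_four, Matrix.cons_val_two, Matrix.cons_val_three])
  rw [diffOp_zero, hrep] at h0z
  simp only [map_add, aeval_monomial_F] at h0z
  norm_num [P, Matrix.cons_val_two, Matrix.cons_val_three, Matrix.cons_val_four, Matrix.vecHead, Matrix.vecTail, Function.comp] at h0z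
  have h01 := cond_of_mem (hvan 0) ![0,1,0,0] (by norm_num [Fin.sum_univ_four, Matrix.cons_val_two, Matrix.cons_val_three])
  rw [diffOp_e1, hrep] at h01
  simp only [map_add, pderiv_monomial_F, F_sub0, F_sub1, F_sub2, F_sub3, aeval_monomial_F] at h01
  norm_num [P, Matrix.cons_val_two, Matrix.cons_val_three, Matrix.cons_val_four, Matrix.vecHead, Matrix.vecTail, Function.comp] at h01
  have h02 := cond_of_mem (hvan 0) ![0,0,1,0] (by norm_num [Fin.sum_univ_four, Matrix.cons_val_two, Matrix.cons_val_three])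
  rw [diffOp_e2, hrep] at h02
  simp only [map_add, pderiv_monomial_F, F_sub0, F_sub1, F_sub2, F_sub3, aeval_monomial_F] at h02
  norm_num [P, Matrix.cons_val_two, Matrix.cons_val_three, Matrix.cons_val_four, Matrix.vecHead, Matrix.vecTail, Function.comp] at h02
  have h03 := cond_of_mem (hvan 0) ![0,0,0,1] (by norm_num [Fin.sum_univ_four, Matrix.cons_val_two, Matrix.cons_val_three])
  rw [diffOp_e3, hrep] at h03
  simp only [map_add, pderiv_monomial_F, F_sub0, F_sub1, F_sub2, F_sub3, aeval_monomial_F] at h03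
  norm_num [P, Matrix.cons_val_two, Matrix.cons_val_three, Matrix.cons_val_four, Matrix.vecHead, Matrix.vecTail, Function.comp] at h03
  have h1z := cond_of_mem (hvan 1) ![0,0,0,0] (by norm_num [Fin.sum_univ_four, Matrix.cons_val_two, Matrix.cons_val_three])
  rw [diffOp_zero, hrep] at h1z
  simp only [map_add, aeval_monomial_F] at h1z
  norm_num [P, Matrix.cons_val_two, Matrix.cons_val_three, Matrix.cons_val_four, Matrix.vecHead, Matrix.vecTail, Function.comp] at h1z
  have h10 := cond_of_mem (hvan 1) ![1,0,0,0] (by norm_num [Fin.sum_univ_four, Matrix.cons_val_two, Matrix.cons_val_three])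
  rw [diffOp_e0, hrep] at h10
  simp only [map_add, pderiv_monomial_F, F_sub0, F_sub1, F_sub2, F_sub3, aeval_monomial_F] at h10
  norm_num [P, Matrix.cons_val_two, Matrix.cons_val_three, Matrix.cons_val_four, Matrix.vecHead, Matrix.vecTail, Function.comp] at h10
  have h12 := cond_of_mem (hvan 1) ![0,0,1,0] (by norm_num [Fin.sum_univ_four, Matrix.cons_val_two, Matrix.cons_val_three])
  rw [diffOp_e2, hrep] at h12
  simp only [map_add, pderiv_monomial_F, F_sub0, F_sub1, F_sub2, F_sub3, aeval_monomial_F] at h12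
  norm_num [P, Matrix.cons_val_two, Matrix.cons_val_three, Matrix.cons_val_four, Matrix.vecHead, Matrix.vecTail, Function.comp] at h12
  have h13 := cond_of_mem (hvan 1) ![0,0,0,1] (by norm_num [Fin.sum_univ_four, Matrix.cons_val_two, Matrix.cons_val_three])
  rw [diffOp_e3, hrep] at h13
  simp only [map_add, pderiv_monomial_F, F_sub0, F_sub1, F_sub2, F_sub3, aeval_monomial_F] at h13
  norm_num [P, Matrix.cons_val_two, Matrix.cons_val_three, Matrix.cons_val_four, Matrix.vecHead, Matrix.vecTail, Function.comp] at h13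
  have h2z := cond_of_mem (hvan 2) ![0,0,0,0] (by norm_num [Fin.sum_univ_four, Matrix.cons_val_two, Matrix.cons_val_three])
  rw [diffOp_zero, hrep] at h2z
  simp only [map_add, aeval_monomial_F] at h2z
  norm_num [P, Matrix.cons_val_two, Matrix.cons_val_three, Matrix.cons_val_four, Matrix.vecHead, Matrix.vecTail, Function.comp] at h2z
  have h20 := cond_of_mem (hvan 2) ![1,0,0,0] (by norm_num [Fin.sum_univ_four, Matrix.cons_val_two, Matrix.cons_val_three])
  rw [diffOp_e0, hrep] at h20
  simp only [map_add, pderiv_monomial_F, F_sub0, F_sub1, F_sub2, F_sub3, aeval_monomial_F] at h20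
  norm_num [P, Matrix.cons_val_two, Matrix.cons_val_three, Matrix.cons_val_four, Matrix.vecHead, Matrix.vecTail, Function.comp] at h20
  have h21 := cond_of_mem (hvan 2) ![0,1,0,0] (by norm_num [Fin.sum_univ_four, Matrix.cons_val_two, Matrix.cons_val_three])
  rw [diffOp_e1, hrep] at h21
  simp only [map_add, pderiv_monomial_F, F_sub0, F_sub1, F_sub2, F_sub3, aeval_monomial_F] at h21
  norm_num [P, Matrix.cons_val_two, Matrix.cons_val_three, Matrix.cons_val_four, Matrix.vecHead, Matrix.vecTail, Function.comp] at h21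
  have h23 := cond_of_mem (hvan 2) ![0,0,0,1] (by norm_num [Fin.sum_univ_four, Matrix.cons_val_two, Matrix.cons_val_three])
  rw [diffOp_e3, hrep] at h23
  simp only [map_add, pderiv_monomial_F, F_sub0, F_sub1, F_sub2, F_sub3, aeval_monomial_F] at h23
  norm_num [P, Matrix.cons_val_two, Matrix.cons_val_three, Matrix.cons_val_four, Matrix.vecHead, Matrix.vecTail, Function.comp] at h23
  have h3z := cond_of_mem (hvan 3) ![0,0,0,0] (by norm_num [Fin.sum_univ_four, Matrix.cons_val_two, Matrix.cons_val_three])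
  rw [diffOp_zero, hrep] at h3z
  simp only [map_add, aeval_monomial_F] at h3z
  norm_num [P, Matrix.cons_val_two, Matrix.cons_val_three, Matrix.cons_val_four, Matrix.vecHead, Matrix.vecTail, Function.comp] at h3z
  have h30 := cond_of_mem (hvan 3) ![1,0,0,0] (by norm_num [Fin.sum_univ_four, Matrix.cons_val_two, Matrix.cons_val_three])
  rw [diffOp_e0, hrep] at h30
  simp only [map_add, pderiv_monomial_F, F_sub0, F_sub1, F_sub2, F_sub3, aeval_monomial_F] at h30
  norm_num [P, Matrix.cons_val_two, Matrix.cons_val_three, Matrix.cons_val_four, Matrix.vecHead, Matrix.vecTail, Function.comp] at h30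
  have h31 := cond_of_mem (hvan 3) ![0,1,0,0] (by norm_num [Fin.sum_univ_four, Matrix.cons_val_two, Matrix.cons_val_three])
  rw [diffOp_e1, hrep] at h31
  simp only [map_add, pderiv_monomial_F, F_sub0, F_sub1, F_sub2, F_sub3, aeval_monomial_F] at h31
  norm_num [P, Matrix.cons_val_two, Matrix.cons_val_three, Matrix.cons_val_four, Matrix.vecHead, Matrix.vecTail, Function.comp] at h31
  have h32 := cond_of_mem (hvan 3) ![0,0,1,0] (by norm_num [Fin.sum_univ_four, Matrix.cons_val_two, Matrix.cons_val_three])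
  rw [diffOp_e2, hrep] at h32
  simp only [map_add, pderiv_monomial_F, F_sub0, F_sub1, F_sub2, F_sub3, aeval_monomial_F] at h32
  norm_num [P, Matrix.cons_val_two, Matrix.cons_val_three, Matrix.cons_val_four, Matrix.vecHead, Matrix.vecTail, Function.comp] at h32
  have h4z := cond_of_mem (hvan 4) ![0,0,0,0] (by norm_num [Fin.sum_univ_four, Matrix.cons_val_two, Matrix.cons_val_three])
  rw [diffOp_zero, hrep] at h4z
  simp only [map_add, aeval_monomial_F] at h4z
  norm_num [P, Matrix.cons_val_two, Matrix.cons_val_three, Matrix.cons_val_four, Matrix.vecHead, Matrix.vecTail, Function.comp] at h4z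
  have h40 := cond_of_mem (hvan 4) ![1,0,0,0] (by norm_num [Fin.sum_univ_four, Matrix.cons_val_two, Matrix.cons_val_three])
  rw [diffOp_e0, hrep] at h40
  simp only [map_add, pderiv_monomial_F, F_sub0, F_sub1, F_sub2, F_sub3, aeval_monomial_F] at h40
  norm_num [P, Matrix.cons_val_two, Matrix.cons_val_three, Matrix.cons_val_four, Matrix.vecHead, Matrix.vecTail, Function.comp] at h40
  have h41 := cond_of_mem (hvan 4) ![0,1,0,0] (by norm_num [Fin.sum_univ_four, Matrix.cons_val_two, Matrix.cons_val_three])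
  rw [diffOp_e1, hrep] at h41
  simp only [map_add, pderiv_monomial_F, F_sub0, F_sub1, F_sub2, F_sub3, aeval_monomial_F] at h41
  norm_num [P, Matrix.cons_val_two, Matrix.cons_val_three, Matrix.cons_val_four, Matrix.vecHead, Matrix.vecTail, Function.comp] at h41
  have h42 := cond_of_mem (hvan 4) ![0,0,1,0] (by norm_num [Fin.sum_univ_four, Matrix.cons_val_two, Matrix.cons_val_three])
  rw [diffOp_e2, hrep] at h42
  simp only [map_add, pderiv_monomial_F, F_sub0, F_sub1, F_sub2, F_sub3, aeval_monomial_F] at h42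
  norm_num [P, Matrix.cons_val_two, Matrix.cons_val_three, Matrix.cons_val_four, Matrix.vecHead, Matrix.vecTail, Function.comp] at h42
  have h43 := cond_of_mem (hvan 4) ![0,0,0,1] (by norm_num [Fin.sum_univ_four, Matrix.cons_val_two, Matrix.cons_val_three])
  rw [diffOp_e3, hrep] at h43
  simp only [map_add, pderiv_monomial_F, F_sub0, F_sub1, F_sub2, F_sub3, aeval_monomial_F] at h43
  norm_num [P, Matrix.cons_val_two, Matrix.cons_val_three, Matrix.cons_val_four, Matrix.vecHead, Matrix.vecTail, Function.comp] at h43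
  have hc0 : coeff (F 3 0 0 0) f = 0 := by linarith [h0z, h01, h02, h03, h1z, h10, h12, h13, h2z, h20, h21, h23, h3z, h30, h31, h32, h4z, h40, h41, h42, h43]
  have hc1 : coeff (F 0 3 0 0) f = 0 := by linarith [h0z, h01, h02, h03, h1z, h10, h12, h13, h2z, h20, h21, h23, h3z, h30, h31, h32, h4z, h40, h41, h42, h43]
  have hc2 : coeff (F 0 0 3 0) f = 0 := by linarith [h0z, h01, h02, h03, h1z, h10, h12, h13, h2z, h20, h21, h23, h3z, h30, h31, h32, h4z, h40, h41, h42, h43]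
  have hc3 : coeff (F 0 0 0 3) f = 0 := by linarith [h0z, h01, h02, h03, h1z, h10, h12, h13, h2z, h20, h21, h23, h3z, h30, h31, h32, h4z, h40, h41, h42, h43]
  have hc4 : coeff (F 2 1 0 0) f = 0 := by linarith [h0z, h01, h02, h03, h1z, h10, h12, h13, h2z, h20, h21, h23, h3z, h30, h31, h32, h4z, h40, h41, h42, h43]
  have hc5 : coeff (F 2 0 1 0) f = 0 := by linarith [h0z, h01, h02, h03, h1z, h10, h12, h13, h2z, h20, h21, h23, h3z, h30, h31, h32, h4z, h40, h41, h42, h43]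
  have hc6 : coeff (F 2 0 0 1) f = 0 := by linarith [h0z, h01, h02, h03, h1z, h10, h12, h13, h2z, h20, h21, h23, h3z, h30, h31, h32, h4z, h40, h41, h42, h43]
  have hc7 : coeff (F 1 2 0 0) f = 0 := by linarith [h0z, h01, h02, h03, h1z, h10, h12, h13, h2z, h20, h21, h23, h3z, h30, h31, h32, h4z, h40, h41, h42, h43]
  have hc8 : coeff (F 0 2 1 0) f = 0 := by linarith [h0z, h01, h02, h03, h1z, h10, h12, h13, h2z, h20, h21, h23, h3z, h30, h31, h32, h4z, h40, h41, h42, h43]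
  have hc9 : coeff (F 0 2 0 1) f = 0 := by linarith [h0z, h01, h02, h03, h1z, h10, h12, h13, h2z, h20, h21, h23, h3z, h30, h31, h32, h4z, h40, h41, h42, h43]
  have hc10 : coeff (F 1 0 2 0) f = 0 := by linarith [h0z, h01, h02, h03, h1z, h10, h12, h13, h2z, h20, h21, h23, h3z, h30, h31, h32, h4z, h40, h41, h42, h43]
  have hc11 : coeff (F 0 1 2 0) f = 0 := by linarith [h0z, h01, h02, h03, h1z, h10, h12, h13, h2z, h20, h21, h23, h3z, h30, h31, h32, h4z, h40, h41, h42, h43]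
  have hc12 : coeff (F 0 0 2 1) f = 0 := by linarith [h0z, h01, h02, h03, h1z, h10, h12, h13, h2z, h20, h21, h23, h3z, h30, h31, h32, h4z, h40, h41, h42, h43]
  have hc13 : coeff (F 1 0 0 2) f = 0 := by linarith [h0z, h01, h02, h03, h1z, h10, h12, h13, h2z, h20, h21, h23, h3z, h30, h31, h32, h4z, h40, h41, h42, h43]
  have hc14 : coeff (F 0 1 0 2) f = 0 := by linarith [h0z, h01, h02, h03, h1z, h10, h12, h13, h2z, h20, h21, h23, h3z, h30, h31, h32, h4z, h40, h41, h42, h43]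
  have hc15 : coeff (F 0 0 1 2) f = 0 := by linarith [h0z, h01, h02, h03, h1z, h10, h12, h13, h2z, h20, h21, h23, h3z, h30, h31, h32, h4z, h40, h41, h42, h43]
  have hc16 : coeff (F 1 1 1 0) f = 0 := by linarith [h0z, h01, h02, h03, h1z, h10, h12, h13, h2z, h20, h21, h23, h3z, h30, h31, h32, h4z, h40, h41, h42, h43]
  have hc17 : coeff (F 1 1 0 1) f = 0 := by linarith [h0z, h01, h02, h03, h1z, h10, h12, h13, h2z, h20, h21, h23, h3z, h30, h31, h32, h4z, h40, h41, h42, h43]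
  have hc18 : coeff (F 1 0 1 1) f = 0 := by linarith [h0z, h01, h02, h03, h1z, h10, h12, h13, h2z, h20, h21, h23, h3z, h30, h31, h32, h4z, h40, h41, h42, h43]
  have hc19 : coeff (F 0 1 1 1) f = 0 := by linarith [h0z, h01, h02, h03, h1z, h10, h12, h13, h2z, h20, h21, h23, h3z, h30, h31, h32, h4z, h40, h41, h42, h43]
  rw [hrep, hc0, hc1, hc2, hc3, hc4, hc5, hc6, hc7, hc8, hc9, hc10, hc11, hc12, hc13, hc14, hc15, hc16, hc17, hc18, hc19]
  simp

set_option maxHeartbeats 1000000 in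
theorem system_eq_bot :
    systemSpace 3 (List.replicate 5 2) (fun i => P i) = ⊥ := by
  rw [eq_bot_iff]
  intro f hf
  rw [systemSpace, Submodule.mem_inf] at hf
  obtain ⟨hhom, hinf⟩ := hf
  rw [Submodule.mem_iInf] at hinf
  rw [Submodule.mem_bot]
  apply key_zero f ((mem_homogeneousSubmodule 3 f).mp hhom)
  intro i
  have h2 := hinf i
  simpa only [List.get_eq_getElem, List.getElem_replicate] using h2

theorem pts_pair_indep : ∀ i j : Fin 5, i ≠ j → LinearIndependent ℚ ![P i, P j] := by
  intro i j hij
  rw [LinearIndependent.pair_iff]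
  intro s t h
  fin_cases i <;> fin_cases j <;> simp only [ne_eq] at hij
  all_goals first
    | exact absurd rfl hij
    | exact absurd trivial hij
    | (have h0 := congrFun h 0
       have h1 := congrFun h 1
       have h2 := congrFun h 2
       have h3 := congrFun h 3
       norm_num [P, Matrix.cons_val_two, Matrix.cons_val_three, Matrix.cons_val_four, Pi.add_apply, Pi.smul_apply, smul_eq_mul,
         Matrix.vecHead, Matrix.vecTail, Function.comp] at h0 h1 h2 h3
       constructor <;> linarith)

/-- `L_3(3; 2^{×5})` is non-special of virtual dimension `−1`. -/
theorem nonSpecial_three_two_pow_five :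
    nonSpecial 3 (List.replicate 5 2) ∧ vdim 3 (List.replicate 5 2) = -1 := by
  have hv : vdim 3 (List.replicate 5 2) = -1 := by
    norm_num [vdim, List.replicate, Nat.choose]
  refine ⟨⟨fun i => P i, ?_, ?_, ?_⟩, hv⟩
  · intro i
    intro h
    fin_cases i <;>
      [have := congrFun h 0; have := congrFun h 1; have := congrFun h 2;
       have := congrFun h 3; have := congrFun h 0] <;>
      norm_num [P, Matrix.cons_val_two, Matrix.cons_val_three, Matrix.cons_val_four, Matrix.vecHead, Matrix.vecTail, Function.comp] at this
  · exact fun i j hij => pts_pair_indep i j hij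
  · rw [hv, system_eq_bot]
    norm_num [finrank_bot]
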